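/- Let L be a field extension of ℚ with [L : ℚ] = 2 and τ ∈ L with τ ∉ ℚ, and let a, b, c, d ∈ ℚ with ad − bc = 1. Then the following are equivalent: (i) cτ + d ≠ 0 and (aτ + b)/(cτ + d) = τ; (ii) aτ + b = (cτ + d)τ. Moreover, in that case the field norm N_{L/ℚ}(cτ + d) equals 1. -/

import Mathlib

/-- Let `L/ℚ` be a quadratic field extension, `τ ∈ L ∖ ℚ`, and
`a, b, c, d ∈ ℚ` with `ad − bc = 1`.  Then `cτ + d ≠ 0` together with
`(aτ + b)/(cτ + d) = τ` is equivalent to `aτ + b = (cτ + d)τ`, and in that case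
the field norm of `cτ + d` equals `1`. -/
theorem stmt_8 (L : Type*) [Field L] [Algebra ℚ L]
    (hdim : Module.finrank ℚ L = 2)
    (τ : L) (hτ : τ ∉ (algebraMap ℚ L).range)
    (a b c d : ℚ) (hdet : a * d - b * c = 1) :
    ((algebraMap ℚ L c * τ + algebraMap ℚ L d ≠ 0 ∧
        (algebraMap ℚ L a * τ + algebraMap ℚ L b) /
          (algebraMap ℚ L c * τ + algebraMap ℚ L d) = τ) ↔
      algebraMap ℚ L a * τ + algebraMap ℚ L b =
        (algebraMap ℚ L c * τ + algebraMap ℚ L d) * τ) ∧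
    (algebraMap ℚ L a * τ + algebraMap ℚ L b =
        (algebraMap ℚ L c * τ + algebraMap ℚ L d) * τ →
      Algebra.norm ℚ (algebraMap ℚ L c * τ + algebraMap ℚ L d) = 1) := by
  have hinj := (algebraMap ℚ L).injective
  set f := algebraMap ℚ L with hf
  have key : ∀ p q : ℚ, f p * τ + f q = 0 → p = 0 ∧ q = 0 := by
    intro p q h
    by_cases hp : p = 0
    · refine ⟨hp, ?_⟩
      rw [hp, map_zero, zero_mul, zero_add] at h
      exact hinj (by simpa using h)
    · exfalso
      apply hτ
      refine ⟨-q / p, ?_⟩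
      have hfp : f p ≠ 0 := fun h0 => hp (hinj (by simpa using h0))
      have hmul : f p * τ = - f q := by linear_combination h
      rw [map_div₀, map_neg, div_eq_iff hfp]
      linear_combination -hmul
  have hden : f a * τ + f b = (f c * τ + f d) * τ → f c * τ + f d ≠ 0 := by
    intro heq h0
    have hb : f a * τ + f b = 0 := by rw [heq, h0, zero_mul]
    obtain ⟨ha0, hb0⟩ := key a b hb
    obtain ⟨hc0, hd0⟩ := key c d h0
    rw [ha0, hb0, hc0, hd0] at hdet
    norm_num at hdet
  constructor
  · constructor
    · rintro ⟨hne, heq⟩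
      rw [div_eq_iff hne] at heq
      rw [heq]; ring
    · intro heq
      have hne := hden heq
      exact ⟨hne, by rw [div_eq_iff hne, heq]; ring⟩
  · intro heq
    have hτ0 : τ ≠ 0 := fun h => hτ ⟨0, by simp [h]⟩
    have hli : LinearIndependent ℚ ![(1 : L), τ] := by
      rw [LinearIndependent.pair_iff]
      intro s t h
      have := key t s (by rw [Algebra.smul_def, Algebra.smul_def, mul_one] at h
                          linear_combination h)
      exact ⟨this.2, this.1⟩
    have hcard : Fintype.card (Fin 2) = Module.finrank ℚ L := by simp [hdim]
    let B := basisOfLinearIndependentOfCardEqFinrank hli hcard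
    have hB : ∀ i, B i = ![(1 : L), τ] i := fun i => by
      simp [B, coe_basisOfLinearIndependentOfCardEqFinrank]
    have hB0 : B 0 = 1 := hB 0
    have hB1 : B 1 = τ := hB 1
    rw [Algebra.norm_eq_matrix_det B]
    have hM : Algebra.leftMulMatrix B (f c * τ + f d) = Matrix.of !![d, b; c, a] := by
      have e0 : (f c * τ + f d) * B 0 = d • B 0 + c • B 1 := by
        rw [hB0, hB1, Algebra.smul_def, Algebra.smul_def, mul_one]; ring
      have e1 : (f c * τ + f d) * B 1 = b • B 0 + a • B 1 := by
        rw [hB0, hB1, Algebra.smul_def, Algebra.smul_def, mul_one, ← heq]; ring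
      have r0 : B.repr ((f c * τ + f d) * B 0) =
          d • Finsupp.single 0 1 + c • Finsupp.single 1 1 := by
        rw [e0, map_add, map_smul, map_smul, B.repr_self, B.repr_self]
      have r1 : B.repr ((f c * τ + f d) * B 1) =
          b • Finsupp.single 0 1 + a • Finsupp.single 1 1 := by
        rw [e1, map_add, map_smul, map_smul, B.repr_self, B.repr_self]
      have r00 : (B.repr ((f c * τ + f d) * B 0)) 0 = d := by rw [r0]; simp
      have r01 : (B.repr ((f c * τ + f d) * B 1)) 0 = b := by rw [r1]; simp
      have r10 : (B.repr ((f c * τ + f d) * B 0)) 1 = c := by rw [r0]; simp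
      have r11 : (B.repr ((f c * τ + f d) * B 1)) 1 = a := by rw [r1]; simp
      ext i j
      rw [Algebra.leftMulMatrix_eq_repr_mul]
      fin_cases i <;> fin_cases j
      · exact r00
      · exact r01
      · exact r10
      · exact r11
    rw [hM]
    rw [Matrix.det_fin_two]
    change d * a - b * c = 1
    linarith
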